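/- Let γ, β > 0 and α > 0 with α(γ+1/2) - 1/2 > 0 and α(β+1/2) - 1/2 > 0, α ≠ 1. For the skew Student's t density f(x) = (1 + x/√(γ+β+x²))^{γ+1/2} (1 - x/√(γ+β+x²))^{β+1/2} / (B(γ,β) √(γ+β) 2^{γ+β-1}) on ℝ, one has ∫_ℝ f(x)^α dx = 4^{α-1} B(α(γ+1/2)-1/2, α(β+1/2)-1/2) / ((√(β+γ))^{α-1} B(γ,β)^α), and hence R_α(f) = (1/(1-α)) log[ 4^{α-1} B(α(γ+1/2)-1/2, α(β+1/2)-1/2) / ((√(β+γ))^{α-1} B(γ,β)^α) ]. -/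

import Mathlib

open Real MeasureTheory

/-- The Beta function. -/
noncomputable def betaFn (p q : ℝ) : ℝ := Real.Gamma p * Real.Gamma q / Real.Gamma (p + q)

lemma betaFn_pos {p q : ℝ} (hp : 0 < p) (hq : 0 < q) : 0 < betaFn p q :=
  div_pos (mul_pos (Real.Gamma_pos_of_pos hp) (Real.Gamma_pos_of_pos hq))
    (Real.Gamma_pos_of_pos (by linarith))

lemma real_beta {p q : ℝ} (hp : 0 < p) (hq : 0 < q) :
    ∫ t in (0:ℝ)..1, t ^ (p-1) * (1-t) ^ (q-1) = betaFn p q := by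
  have hG : Complex.Gamma ((p:ℂ) + q) ≠ 0 := by
    rw [show ((p:ℂ) + q) = ((p+q : ℝ) : ℂ) by push_cast; ring, Complex.Gamma_ofReal]
    exact_mod_cast (Real.Gamma_pos_of_pos (by linarith : (0:ℝ) < p + q)).ne'
  have hb : Complex.betaIntegral p q = ((betaFn p q : ℝ) : ℂ) := by
    have := Complex.Gamma_mul_Gamma_eq_betaIntegral (s := p) (t := q)
      (by simpa using hp) (by simpa using hq)
    rw [show ((p:ℂ)+q) = ((p+q:ℝ):ℂ) by push_cast; ring] at this hG
    simp only [Complex.Gamma_ofReal] at this hG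
    rw [betaFn]
    push_cast
    rw [eq_div_iff hG]
    linear_combination -this
  have hcong : Complex.betaIntegral p q
      = ((∫ t in (0:ℝ)..1, t ^ (p-1) * (1-t) ^ (q-1) : ℝ) : ℂ) := by
    rw [Complex.betaIntegral, ← intervalIntegral.integral_ofReal]
    refine intervalIntegral.integral_congr fun x hx => ?_
    rw [Set.uIcc_of_le (by norm_num : (0:ℝ) ≤ 1)] at hx
    rw [show ((p:ℂ)-1) = ((p-1:ℝ):ℂ) by push_cast; ring,
      show ((q:ℂ)-1) = ((q-1:ℝ):ℂ) by push_cast; ring,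
      show ((1:ℂ) - (x:ℂ)) = ((1-x:ℝ):ℂ) by push_cast; ring,
      ← Complex.ofReal_cpow hx.1, ← Complex.ofReal_cpow (by linarith [hx.2] : (0:ℝ) ≤ 1 - x)]
    push_cast; ring
  have := hb.symm.trans hcong
  exact_mod_cast this.symm

lemma beta_Ioo {p q : ℝ} (hp : 0 < p) (hq : 0 < q) :
    ∫ y in Set.Ioo (-1:ℝ) 1, (1+y) ^ (p-1) * (1-y) ^ (q-1)
      = 2 ^ (p+q-1) * betaFn p q := by
  have h0 : ∫ y in Set.Ioo (-1:ℝ) 1, (1+y) ^ (p-1) * (1-y) ^ (q-1)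
      = ∫ y in (-1:ℝ)..1, (1+y) ^ (p-1) * (1-y) ^ (q-1) := by
    rw [intervalIntegral.integral_of_le (by norm_num), integral_Ioc_eq_integral_Ioo]
  rw [h0]
  have h1 : ∫ t in (0:ℝ)..1, (fun y => (1+y) ^ (p-1) * (1-y) ^ (q-1)) (2*t + -1)
      = (2:ℝ)⁻¹ • ∫ y in (2*0 + -1 : ℝ)..(2*1 + -1 : ℝ), (1+y) ^ (p-1) * (1-y) ^ (q-1) :=
    intervalIntegral.integral_comp_mul_add (fun y => (1+y) ^ (p-1) * (1-y) ^ (q-1)) (by norm_num : (2:ℝ) ≠ 0) (-1)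
  norm_num at h1
  have h2 : ∫ t in (0:ℝ)..1, (2*t) ^ (p-1) * (1 - (2*t + -1)) ^ (q-1)
      = 2 ^ (p-1) * 2 ^ (q-1) * ∫ t in (0:ℝ)..1, t ^ (p-1) * (1-t) ^ (q-1) := by
    rw [← intervalIntegral.integral_const_mul]
    refine intervalIntegral.integral_congr fun t ht => ?_
    rw [Set.uIcc_of_le (by norm_num : (0:ℝ) ≤ 1)] at ht
    rw [show (1 - (2*t + -1)) = 2 * (1-t) by ring,
      Real.mul_rpow (by norm_num) ht.1, Real.mul_rpow (by norm_num) (by linarith [ht.2])]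
    ring
  rw [h2, real_beta hp hq] at h1
  rw [show p+q-1 = 1+(p-1)+(q-1) by ring, Real.rpow_add two_pos, Real.rpow_add two_pos,
    Real.rpow_one]
  linarith [h1]

lemma cov {c : ℝ} (hc : 0 < c) (G : ℝ → ℝ) :
    ∫ x : ℝ, G (x / Real.sqrt (c + x^2))
      = ∫ y in Set.Ioo (-1:ℝ) 1, (Real.sqrt c * (1-y^2) ^ (-(3/2) : ℝ)) * G y := by
  set f : ℝ → ℝ := fun y => Real.sqrt c * (y / Real.sqrt (1 - y^2)) with hf
  set f' : ℝ → ℝ := fun y => Real.sqrt c * (1-y^2) ^ (-(3/2) : ℝ) with hf'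
  have hcpos : 0 < Real.sqrt c := Real.sqrt_pos.mpr hc
  have h01 : ∀ y ∈ Set.Ioo (-1:ℝ) 1, 0 < 1 - y^2 := fun y hy => by
    obtain ⟨h1, h2⟩ := hy; nlinarith
  have hinv : ∀ y ∈ Set.Ioo (-1:ℝ) 1, f y / Real.sqrt (c + (f y)^2) = y := by
    intro y hy
    have h1 := h01 y hy
    have hs : 0 < Real.sqrt (1 - y^2) := Real.sqrt_pos.mpr h1
    have hsq : (f y)^2 = c * y^2 / (1 - y^2) := by
      rw [hf]; simp only
      rw [mul_pow, div_pow, Real.sq_sqrt hc.le, Real.sq_sqrt h1.le]; ring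
    have hce : c + (f y)^2 = c / (1 - y^2) := by
      rw [hsq]; field_simp; ring
    rw [hce, Real.sqrt_div hc.le, hf]
    field_simp
  have himg : f '' Set.Ioo (-1:ℝ) 1 = Set.univ := by
    ext x
    simp only [Set.mem_univ, iff_true, Set.mem_image]
    have hcx : 0 < c + x^2 := by positivity
    have hsx : 0 < Real.sqrt (c + x^2) := Real.sqrt_pos.mpr hcx
    have habs : |x| < Real.sqrt (c + x^2) := by
      rw [← Real.sqrt_sq_eq_abs]
      exact Real.sqrt_lt_sqrt (sq_nonneg x) (by linarith)
    refine ⟨x / Real.sqrt (c + x^2), ?_, ?_⟩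
    · have hlt : |x / Real.sqrt (c + x^2)| < 1 := by
        rw [abs_div, abs_of_pos hsx]
        exact (div_lt_one hsx).mpr habs
      exact Set.mem_Ioo.mpr (abs_lt.mp hlt)
    · have hy2 : 1 - (x / Real.sqrt (c + x^2))^2 = c / (c + x^2) := by
        rw [div_pow, Real.sq_sqrt hcx.le]; field_simp; ring
      rw [hf]; simp only
      rw [hy2, Real.sqrt_div hc.le]
      field_simp
  have hinj : Set.InjOn f (Set.Ioo (-1:ℝ) 1) := fun a ha b hb hab => by
    have h1 := hinv a ha
    have h2 := hinv b hb
    rw [hab] at h1; exact h1.symm.trans h2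
  have hderiv : ∀ y ∈ Set.Ioo (-1:ℝ) 1,
      HasDerivWithinAt f (f' y) (Set.Ioo (-1:ℝ) 1) y := by
    intro y hy
    have h1 := h01 y hy
    have hs : 0 < Real.sqrt (1 - y^2) := Real.sqrt_pos.mpr h1
    have hv : HasDerivAt (fun y : ℝ => Real.sqrt (1 - y^2))
        (1/(2 * Real.sqrt (1 - y^2)) * (-(2 * y^1))) y :=
      (Real.hasDerivAt_sqrt h1.ne').comp y ((hasDerivAt_pow 2 y).const_sub 1)
    have hdiv := ((hasDerivAt_id y).div hv hs.ne').const_mul (Real.sqrt c)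
    simp only [id_eq] at hdiv
    have hss : Real.sqrt (1 - y^2) ^ 2 = 1 - y^2 := Real.sq_sqrt h1.le
    have hrp : (1-y^2) ^ (-(3/2) : ℝ) = (Real.sqrt (1 - y^2) ^ 3)⁻¹ := by
      rw [← hss, ← Real.rpow_natCast (Real.sqrt (1-y^2)) 2, ← Real.rpow_mul hs.le]
      norm_num
    have heq : Real.sqrt c * ((1 * Real.sqrt (1 - y^2) -
        y * (1/(2 * Real.sqrt (1 - y^2)) * (-(2 * y^1)))) / Real.sqrt (1 - y^2) ^ 2)
        = f' y := by
      simp only [hf', pow_one]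
      rw [hrp]
      field_simp
      linear_combination hss
    exact (heq ▸ hdiv).hasDerivWithinAt
  calc ∫ x : ℝ, G (x / Real.sqrt (c + x^2))
      = ∫ x in f '' Set.Ioo (-1:ℝ) 1, G (x / Real.sqrt (c + x^2)) := by
        rw [himg, Measure.restrict_univ]
    _ = ∫ y in Set.Ioo (-1:ℝ) 1, |f' y| • G (f y / Real.sqrt (c + (f y)^2)) :=
        integral_image_eq_integral_abs_deriv_smul measurableSet_Ioo hderiv hinj _
    _ = ∫ y in Set.Ioo (-1:ℝ) 1, (Real.sqrt c * (1-y^2) ^ (-(3/2) : ℝ)) * G y := by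
        refine setIntegral_congr_fun measurableSet_Ioo fun y hy => ?_
        have h1 := h01 y hy
        rw [hinv y hy, smul_eq_mul, abs_of_pos]
        rw [hf']
        positivity

lemma div_sqrt_mem {c : ℝ} (hc : 0 < c) (x : ℝ) :
    x / Real.sqrt (c + x^2) ∈ Set.Ioo (-1:ℝ) 1 := by
  have hcx : 0 < c + x^2 := by positivity
  have hsx : 0 < Real.sqrt (c + x^2) := Real.sqrt_pos.mpr hcx
  have habs : |x| < Real.sqrt (c + x^2) := by
    rw [← Real.sqrt_sq_eq_abs]
    exact Real.sqrt_lt_sqrt (sq_nonneg x) (by linarith)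
  have hlt : |x / Real.sqrt (c + x^2)| < 1 := by
    rw [abs_div, abs_of_pos hsx]
    exact (div_lt_one hsx).mpr habs
  exact Set.mem_Ioo.mpr (abs_lt.mp hlt)

theorem renyi_skew_t (γ β α : ℝ) (hγ : 0 < γ) (hβ : 0 < β) (hα : 0 < α)
    (h1 : 0 < α * (γ + 1/2) - 1/2) (h2 : 0 < α * (β + 1/2) - 1/2) (hα1 : α ≠ 1) :
    (∫ x : ℝ,
      ((1 + x / Real.sqrt (γ + β + x^2)) ^ (γ + 1/2) *
        (1 - x / Real.sqrt (γ + β + x^2)) ^ (β + 1/2) /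
          (betaFn γ β * Real.sqrt (γ + β) * 2 ^ (γ + β - 1))) ^ α) =
      4 ^ (α - 1) * betaFn (α * (γ + 1/2) - 1/2) (α * (β + 1/2) - 1/2) /
        (Real.sqrt (β + γ) ^ (α - 1) * betaFn γ β ^ α)
    ∧ (1 / (1 - α)) * Real.log (∫ x : ℝ,
      ((1 + x / Real.sqrt (γ + β + x^2)) ^ (γ + 1/2) *
        (1 - x / Real.sqrt (γ + β + x^2)) ^ (β + 1/2) /
          (betaFn γ β * Real.sqrt (γ + β) * 2 ^ (γ + β - 1))) ^ α) =
    (1 / (1 - α)) * Real.log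
      (4 ^ (α - 1) * betaFn (α * (γ + 1/2) - 1/2) (α * (β + 1/2) - 1/2) /
        (Real.sqrt (β + γ) ^ (α - 1) * betaFn γ β ^ α)) := by
  have hc : 0 < γ + β := by linarith
  have hB : 0 < betaFn γ β := betaFn_pos hγ hβ
  have hsc : 0 < Real.sqrt (γ + β) := Real.sqrt_pos.mpr hc
  set K : ℝ := betaFn γ β * Real.sqrt (γ + β) * 2 ^ (γ + β - 1) with hK
  have hKpos : 0 < K := by positivity
  set G : ℝ → ℝ := fun y =>
    (1+y) ^ ((γ+1/2)*α) * (1-y) ^ ((β+1/2)*α) / K ^ α with hG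
  have key : ∀ x : ℝ,
      ((1 + x / Real.sqrt (γ + β + x^2)) ^ (γ + 1/2) *
        (1 - x / Real.sqrt (γ + β + x^2)) ^ (β + 1/2) / K) ^ α
      = G (x / Real.sqrt ((γ+β) + x^2)) := by
    intro x
    have hmem := div_sqrt_mem hc x
    obtain ⟨hm1, hm2⟩ := hmem
    have hp1 : (0:ℝ) ≤ 1 + x / Real.sqrt ((γ+β) + x^2) := by linarith
    have hp2 : (0:ℝ) ≤ 1 - x / Real.sqrt ((γ+β) + x^2) := by linarith
    rw [hG]
    simp only
    rw [show γ + β + x^2 = (γ+β) + x^2 from rfl,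
      Real.div_rpow (by positivity) hKpos.le,
      Real.mul_rpow (by positivity) (by positivity),
      ← Real.rpow_mul hp1, ← Real.rpow_mul hp2]
  have main : (∫ x : ℝ,
      ((1 + x / Real.sqrt (γ + β + x^2)) ^ (γ + 1/2) *
        (1 - x / Real.sqrt (γ + β + x^2)) ^ (β + 1/2) / K) ^ α) =
      4 ^ (α - 1) * betaFn (α * (γ + 1/2) - 1/2) (α * (β + 1/2) - 1/2) /
        (Real.sqrt (β + γ) ^ (α - 1) * betaFn γ β ^ α) := by
    rw [show β + γ = γ + β from add_comm β γ]
    calc (∫ x : ℝ,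
        ((1 + x / Real.sqrt (γ + β + x^2)) ^ (γ + 1/2) *
          (1 - x / Real.sqrt (γ + β + x^2)) ^ (β + 1/2) / K) ^ α)
        = ∫ x : ℝ, G (x / Real.sqrt ((γ+β) + x^2)) := by
          exact integral_congr_ae (Filter.Eventually.of_forall key)
      _ = ∫ y in Set.Ioo (-1:ℝ) 1,
            (Real.sqrt (γ+β) * (1-y^2) ^ (-(3/2) : ℝ)) * G y := cov hc G
      _ = ∫ y in Set.Ioo (-1:ℝ) 1,
            (Real.sqrt (γ+β) / K ^ α) *
              ((1+y) ^ ((α * (γ + 1/2) - 1/2) - 1) * (1-y) ^ ((α * (β + 1/2) - 1/2) - 1)) := by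
          refine setIntegral_congr_fun measurableSet_Ioo fun y hy => ?_
          obtain ⟨hm1, hm2⟩ := hy
          have hy1 : (0:ℝ) < 1 + y := by linarith
          have hy2 : (0:ℝ) < 1 - y := by linarith
          have e1 : (1+y) ^ ((α * (γ + 1/2) - 1/2) - 1)
              = (1+y) ^ ((γ+1/2)*α) * (1+y) ^ (-(3/2) : ℝ) := by
            rw [← Real.rpow_add hy1]; congr 1; ring
          have e2 : (1-y) ^ ((α * (β + 1/2) - 1/2) - 1)
              = (1-y) ^ ((β+1/2)*α) * (1-y) ^ (-(3/2) : ℝ) := by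
            rw [← Real.rpow_add hy2]; congr 1; ring
          rw [hG]
          simp only
          rw [show (1:ℝ)-y^2 = (1+y)*(1-y) by ring,
            Real.mul_rpow hy1.le hy2.le, e1, e2]
          ring
      _ = (Real.sqrt (γ+β) / K ^ α) *
            ∫ y in Set.Ioo (-1:ℝ) 1,
              ((1+y) ^ ((α * (γ + 1/2) - 1/2) - 1) * (1-y) ^ ((α * (β + 1/2) - 1/2) - 1)) :=
          MeasureTheory.integral_const_mul _ _
      _ = (Real.sqrt (γ+β) / K ^ α) *
            (2 ^ ((α * (γ + 1/2) - 1/2) + (α * (β + 1/2) - 1/2) - 1) *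
              betaFn (α * (γ + 1/2) - 1/2) (α * (β + 1/2) - 1/2)) := by
          rw [beta_Ioo h1 h2]
      _ = 4 ^ (α - 1) * betaFn (α * (γ + 1/2) - 1/2) (α * (β + 1/2) - 1/2) /
            (Real.sqrt (γ + β) ^ (α - 1) * betaFn γ β ^ α) := by
          have hKexp : K ^ α
              = betaFn γ β ^ α * Real.sqrt (γ+β) ^ α * 2 ^ ((γ+β-1)*α) := by
            rw [hK, Real.mul_rpow (by positivity) (by positivity),
              Real.mul_rpow hB.le (Real.sqrt_nonneg _),
              ← Real.rpow_mul (by norm_num : (0:ℝ) ≤ 2)]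
          have h4 : (4:ℝ) ^ (α-1) = 2 ^ (2*(α-1)) := by
            rw [Real.rpow_mul (by norm_num : (0:ℝ) ≤ 2)]
            norm_num
          have h2exp : (2:ℝ) ^ ((α * (γ + 1/2) - 1/2) + (α * (β + 1/2) - 1/2) - 1)
              = 2 ^ (2*(α-1)) * 2 ^ ((γ+β-1)*α) := by
            rw [← Real.rpow_add two_pos]; congr 1; ring
          have hscm : Real.sqrt (γ+β) * Real.sqrt (γ+β) ^ (α-1)
              = Real.sqrt (γ+β) ^ α := by
            nth_rewrite 1 [← Real.rpow_one (Real.sqrt (γ+β))]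
            rw [← Real.rpow_add hsc]; congr 1; ring
          rw [hKexp, h4, h2exp, div_mul_eq_mul_div,
            div_eq_div_iff (by positivity) (by positivity)]
          linear_combination (2 ^ (2*(α-1)) * 2 ^ ((γ+β-1)*α) *
            betaFn (α * (γ + 1/2) - 1/2) (α * (β + 1/2) - 1/2) * betaFn γ β ^ α) * hscm
  exact ⟨main, by rw [main]⟩
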